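/- Let μ and ν be probability measures on ℝ^d with finite first moments, and let F : ℝ^d × ℝ^d → ℝ^d satisfy: (i) for every x, the map z ↦ F(x,z) is Lipschitz with constant c₁(1 + ‖x‖); (ii) for every z, the map x ↦ F(x,z) is Lipschitz with constant c₂(1 + ‖z‖). Define T_μ(x) = x + ε E_{X'∼μ}[F(X', x)] and T_ν(z) = z + ε E_{X'∼ν}[F(X', z)], and let Φ(μ), Φ(ν) be the pushforwards of μ, ν under T_μ, T_ν respectively. Then W₁(Φ(μ), Φ(ν)) ≤ W₁(μ, ν) · (1 + ε c₁(1 + μ(‖·‖)) + ε c₂(1 + ν(‖·‖))), where W₁ is the 1-Wasserstein distance and μ(‖·‖) = ∫‖x‖ dμ(x). -/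

import Mathlib

open MeasureTheory

/-- The 1-Wasserstein distance, defined as the infimum of transport costs over couplings. -/
noncomputable def W1 {d : ℕ} (μ ν : Measure (EuclideanSpace ℝ (Fin d))) : ℝ :=
  sInf {c | ∃ π : Measure (EuclideanSpace ℝ (Fin d) × EuclideanSpace ℝ (Fin d)),
    IsProbabilityMeasure π ∧ π.map Prod.fst = μ ∧ π.map Prod.snd = ν ∧
    (∫ p, ‖p.1 - p.2‖ ∂π) = c}

theorem stmt_10 {d : ℕ}
    (μ ν : Measure (EuclideanSpace ℝ (Fin d)))
    [IsProbabilityMeasure μ] [IsProbabilityMeasure ν]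
    (hμ : Integrable (fun x => ‖x‖) μ) (hν : Integrable (fun x => ‖x‖) ν)
    (F : EuclideanSpace ℝ (Fin d) → EuclideanSpace ℝ (Fin d) → EuclideanSpace ℝ (Fin d))
    (hFmeas : Measurable (Function.uncurry F))
    (ε c₁ c₂ : ℝ) (hε : 0 < ε) (hc₁ : 0 < c₁) (hc₂ : 0 < c₂)
    (hlip₁ : ∀ x z₁ z₂, ‖F x z₁ - F x z₂‖ ≤ c₁ * (1 + ‖x‖) * ‖z₁ - z₂‖)
    (hlip₂ : ∀ x₁ x₂ z, ‖F x₁ z - F x₂ z‖ ≤ c₂ * (1 + ‖z‖) * ‖x₁ - x₂‖)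
    (Tμ Tν : EuclideanSpace ℝ (Fin d) → EuclideanSpace ℝ (Fin d))
    (hTμ : ∀ x, Tμ x = x + ε • ∫ x', F x' x ∂μ)
    (hTν : ∀ z, Tν z = z + ε • ∫ x', F x' z ∂ν) :
    W1 (μ.map Tμ) (ν.map Tν) ≤
      W1 μ ν * (1 + ε * c₁ * (1 + ∫ x, ‖x‖ ∂μ) + ε * c₂ * (1 + ∫ x, ‖x‖ ∂ν)) := by
  have hmμ0 : 0 ≤ ∫ x, ‖x‖ ∂μ := integral_nonneg fun x => norm_nonneg x
  have hmν0 : 0 ≤ ∫ x, ‖x‖ ∂ν := integral_nonneg fun x => norm_nonneg x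
  set mμ := ∫ x, ‖x‖ ∂μ with hmμdef
  set mν := ∫ x, ‖x‖ ∂ν with hmνdef
  set K := 1 + ε * c₁ * (1 + mμ) + ε * c₂ * (1 + mν) with hKdef
  have hK0 : 0 < K := by
    have h1 : 0 ≤ ε * c₁ * (1 + mμ) := by positivity
    have h2 : 0 ≤ ε * c₂ * (1 + mν) := by positivity
    have : (0:ℝ) < 1 := one_pos
    linarith
  -- measurability of F in the first slot
  have hFm : ∀ z : EuclideanSpace ℝ (Fin d), Measurable (fun x' => F x' z) := fun z =>
    hFmeas.comp (measurable_id.prodMk measurable_const)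
  -- pointwise growth bound on F
  have hFbound : ∀ x' z : EuclideanSpace ℝ (Fin d),
      ‖F x' z‖ ≤ (‖F 0 0‖ + c₁ * ‖z‖) + c₂ * (1 + ‖z‖) * ‖x'‖ := by
    intro x' z
    have h1 : ‖F x' z - F 0 z‖ ≤ c₂ * (1 + ‖z‖) * ‖x'‖ := by
      simpa using hlip₂ x' 0 z
    have h2 : ‖F 0 z - F 0 0‖ ≤ c₁ * ‖z‖ := by
      simpa using hlip₁ 0 z 0
    have e : F x' z = (F x' z - F 0 z) + ((F 0 z - F 0 0) + F 0 0) := by abel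
    calc ‖F x' z‖ = ‖(F x' z - F 0 z) + ((F 0 z - F 0 0) + F 0 0)‖ := by rw [← e]
      _ ≤ ‖F x' z - F 0 z‖ + (‖F 0 z - F 0 0‖ + ‖F 0 0‖) :=
          (norm_add_le _ _).trans (by gcongr; exact norm_add_le _ _)
      _ ≤ (‖F 0 0‖ + c₁ * ‖z‖) + c₂ * (1 + ‖z‖) * ‖x'‖ := by linarith
  -- integrability of F in the first slot against measures with finite first moment
  have hIntF : ∀ (ρ : Measure (EuclideanSpace ℝ (Fin d))) [IsProbabilityMeasure ρ],
      Integrable (fun x => ‖x‖) ρ → ∀ z, Integrable (fun x' => F x' z) ρ := by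
    intro ρ _ hρ z
    refine Integrable.mono'
      (g := fun x' => (‖F 0 0‖ + c₁ * ‖z‖) + c₂ * (1 + ‖z‖) * ‖x'‖)
      ((integrable_const _).add (hρ.const_mul _)) ((hFm z).aestronglyMeasurable) ?_
    exact Filter.Eventually.of_forall fun x' => hFbound x' z
  -- Lipschitz bound for the averaged field (lemma A)
  have hA : ∀ (ρ : Measure (EuclideanSpace ℝ (Fin d))) [IsProbabilityMeasure ρ],
      ∀ (_ : Integrable (fun x => ‖x‖) ρ) (x z : EuclideanSpace ℝ (Fin d)),
      ‖(∫ x', F x' x ∂ρ) - ∫ x', F x' z ∂ρ‖ ≤ c₁ * (1 + ∫ x', ‖x'‖ ∂ρ) * ‖x - z‖ := by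
    intro ρ _ hρ x z
    rw [← integral_sub (hIntF ρ hρ x) (hIntF ρ hρ z)]
    have hint : Integrable (fun x' : EuclideanSpace ℝ (Fin d) => c₁ * (1 + ‖x'‖) * ‖x - z‖) ρ := by
      have h := (((integrable_const (1:ℝ)).add hρ).const_mul c₁).mul_const ‖x - z‖
      simpa [mul_assoc] using h
    calc ‖∫ x', F x' x - F x' z ∂ρ‖ ≤ ∫ x', ‖F x' x - F x' z‖ ∂ρ :=
        norm_integral_le_integral_norm _
      _ ≤ ∫ x', c₁ * (1 + ‖x'‖) * ‖x - z‖ ∂ρ :=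
        integral_mono ((hIntF ρ hρ x).sub (hIntF ρ hρ z)).norm hint (fun x' => hlip₁ x' x z)
      _ = c₁ * (1 + ∫ x', ‖x'‖ ∂ρ) * ‖x - z‖ := by
        rw [show (fun x' : EuclideanSpace ℝ (Fin d) => c₁ * (1 + ‖x'‖) * ‖x - z‖)
            = fun x' => (c₁ * ‖x - z‖) * (1 + ‖x'‖) from funext fun _ => by ring,
          integral_const_mul, integral_add (integrable_const _) hρ, integral_const]
        simp [measure_univ]
        ring
  -- continuity of the transport maps
  have hTcont : ∀ (ρ : Measure (EuclideanSpace ℝ (Fin d))) [IsProbabilityMeasure ρ],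
      ∀ (_ : Integrable (fun x => ‖x‖) ρ)
      (T : EuclideanSpace ℝ (Fin d) → EuclideanSpace ℝ (Fin d)),
      (∀ x, T x = x + ε • ∫ x', F x' x ∂ρ) → Continuous T := by
    intro ρ _ hρ T hT
    have hL0 : 0 ≤ c₁ * (1 + ∫ x', ‖x'‖ ∂ρ) := by
      have : 0 ≤ ∫ x', ‖x'‖ ∂ρ := integral_nonneg fun x => norm_nonneg x
      positivity
    have hg : LipschitzWith (Real.toNNReal (c₁ * (1 + ∫ x', ‖x'‖ ∂ρ)))
        (fun x => ∫ x', F x' x ∂ρ) := by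
      apply LipschitzWith.of_dist_le_mul
      intro x z
      rw [dist_eq_norm, dist_eq_norm, Real.coe_toNNReal _ hL0]
      exact hA ρ hρ x z
    have : T = fun x => x + ε • ∫ x', F x' x ∂ρ := funext hT
    rw [this]
    exact continuous_id.add (hg.continuous.const_smul ε)
  have hTμc : Continuous Tμ := hTcont μ hμ Tμ hTμ
  have hTνc : Continuous Tν := hTcont ν hν Tν hTν
  -- bounded-below of coupling cost sets
  have hbdd : ∀ (α β : Measure (EuclideanSpace ℝ (Fin d))),
      BddBelow {c | ∃ π : Measure (EuclideanSpace ℝ (Fin d) × EuclideanSpace ℝ (Fin d)),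
        IsProbabilityMeasure π ∧ π.map Prod.fst = α ∧ π.map Prod.snd = β ∧
        (∫ p, ‖p.1 - p.2‖ ∂π) = c} := by
    intro α β
    refine ⟨0, fun c hc => ?_⟩
    obtain ⟨π, _, _, _, rfl⟩ := hc
    exact integral_nonneg fun p => norm_nonneg _
  -- nonemptiness via the product coupling
  have hSne : Set.Nonempty {c | ∃ π : Measure (EuclideanSpace ℝ (Fin d) × EuclideanSpace ℝ (Fin d)),
      IsProbabilityMeasure π ∧ π.map Prod.fst = μ ∧ π.map Prod.snd = ν ∧
      (∫ p, ‖p.1 - p.2‖ ∂π) = c} := by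
    refine ⟨∫ p, ‖p.1 - p.2‖ ∂(μ.prod ν), μ.prod ν, inferInstance, ?_, ?_, rfl⟩
    · have := Measure.fst_prod (μ := μ) (ν := ν)
      simpa [Measure.fst] using this
    · have := Measure.snd_prod (μ := μ) (ν := ν)
      simpa [Measure.snd] using this
  -- key estimate: for every coupling of (μ, ν) with cost c, W1 of the images is ≤ K * c
  have key : ∀ c : ℝ,
      (∃ π : Measure (EuclideanSpace ℝ (Fin d) × EuclideanSpace ℝ (Fin d)),
        IsProbabilityMeasure π ∧ π.map Prod.fst = μ ∧ π.map Prod.snd = ν ∧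
        (∫ p, ‖p.1 - p.2‖ ∂π) = c) →
      W1 (μ.map Tμ) (ν.map Tν) ≤ K * c := by
    rintro c ⟨π, hπ, hfst, hsnd, hcost⟩
    have hc0 : 0 ≤ c := hcost ▸ integral_nonneg fun p => norm_nonneg _
    -- integrability of coordinates' norms under π
    have hπ1 : Integrable (fun p : EuclideanSpace ℝ (Fin d) × EuclideanSpace ℝ (Fin d) => ‖p.1‖) π := by
      have hμ' : Integrable (fun x => ‖x‖) (π.map Prod.fst) := by rw [hfst]; exact hμ
      have := (integrable_map_measure hμ'.aestronglyMeasurable measurable_fst.aemeasurable).mp hμ'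
      exact this
    have hπ2 : Integrable (fun p : EuclideanSpace ℝ (Fin d) × EuclideanSpace ℝ (Fin d) => ‖p.2‖) π := by
      have hν' : Integrable (fun x => ‖x‖) (π.map Prod.snd) := by rw [hsnd]; exact hν
      have := (integrable_map_measure hν'.aestronglyMeasurable measurable_snd.aemeasurable).mp hν'
      exact this
    have hcostInt : Integrable (fun p : EuclideanSpace ℝ (Fin d) × EuclideanSpace ℝ (Fin d) =>
        ‖p.1 - p.2‖) π := by
      refine (hπ1.add hπ2).mono'
        ((continuous_fst.sub continuous_snd).norm.aestronglyMeasurable) ?_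
      refine Filter.Eventually.of_forall fun p => ?_
      simp only [Real.norm_eq_abs, abs_of_nonneg (norm_nonneg _)]
      exact norm_sub_le _ _
    -- lemma B : comparing the averages over μ and ν via the coupling
    have hB : ∀ z : EuclideanSpace ℝ (Fin d),
        ‖(∫ x', F x' z ∂μ) - ∫ x', F x' z ∂ν‖ ≤ c₂ * (1 + ‖z‖) * c := by
      intro z
      have hμz : Integrable (fun p : EuclideanSpace ℝ (Fin d) × EuclideanSpace ℝ (Fin d) =>
          F p.1 z) π := by
        have h1 : Integrable (fun x' => F x' z) (π.map Prod.fst) := by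
          rw [hfst]; exact hIntF μ hμ z
        have := (integrable_map_measure h1.aestronglyMeasurable measurable_fst.aemeasurable).mp h1
        exact this
      have hνz : Integrable (fun p : EuclideanSpace ℝ (Fin d) × EuclideanSpace ℝ (Fin d) =>
          F p.2 z) π := by
        have h1 : Integrable (fun x' => F x' z) (π.map Prod.snd) := by
          rw [hsnd]; exact hIntF ν hν z
        have := (integrable_map_measure h1.aestronglyMeasurable measurable_snd.aemeasurable).mp h1
        exact this
      have e1 : (∫ x', F x' z ∂μ) = ∫ p, F p.1 z ∂π := by
        rw [← hfst, integral_map measurable_fst.aemeasurable]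
        rw [hfst]; exact (hFm z).aestronglyMeasurable
      have e2 : (∫ x', F x' z ∂ν) = ∫ p, F p.2 z ∂π := by
        rw [← hsnd, integral_map measurable_snd.aemeasurable]
        rw [hsnd]; exact (hFm z).aestronglyMeasurable
      rw [e1, e2, ← integral_sub hμz hνz]
      calc ‖∫ p, F p.1 z - F p.2 z ∂π‖ ≤ ∫ p, ‖F p.1 z - F p.2 z‖ ∂π :=
          norm_integral_le_integral_norm _
        _ ≤ ∫ p, c₂ * (1 + ‖z‖) * ‖p.1 - p.2‖ ∂π :=
          integral_mono (hμz.sub hνz).norm (hcostInt.const_mul _) (fun p => hlip₂ p.1 p.2 z)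
        _ = c₂ * (1 + ‖z‖) * c := by rw [integral_const_mul, hcost]
    -- pointwise bound on the transported distance
    have hpt : ∀ p : EuclideanSpace ℝ (Fin d) × EuclideanSpace ℝ (Fin d),
        ‖Tμ p.1 - Tν p.2‖ ≤ (1 + ε * c₁ * (1 + mμ)) * ‖p.1 - p.2‖ + ε * (c₂ * c) * (1 + ‖p.2‖) := by
      rintro ⟨x, z⟩
      rw [hTμ x, hTν z]
      have e : (x + ε • ∫ x', F x' x ∂μ) - (z + ε • ∫ x', F x' z ∂ν)
          = (x - z) + ε • ((∫ x', F x' x ∂μ) - ∫ x', F x' z ∂ν) := by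
        rw [smul_sub]; abel
      rw [e]
      have h2 : ‖(∫ x', F x' x ∂μ) - ∫ x', F x' z ∂ν‖
          ≤ c₁ * (1 + mμ) * ‖x - z‖ + c₂ * (1 + ‖z‖) * c := by
        have tri : ‖(∫ x', F x' x ∂μ) - ∫ x', F x' z ∂ν‖
            ≤ ‖(∫ x', F x' x ∂μ) - ∫ x', F x' z ∂μ‖
              + ‖(∫ x', F x' z ∂μ) - ∫ x', F x' z ∂ν‖ :=
          norm_sub_le_norm_sub_add_norm_sub _ _ _
        have := hA μ hμ x z
        have := hB z
        linarith [hA μ hμ x z, hB z, tri]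
      calc ‖(x - z) + ε • ((∫ x', F x' x ∂μ) - ∫ x', F x' z ∂ν)‖
          ≤ ‖x - z‖ + ε * ‖(∫ x', F x' x ∂μ) - ∫ x', F x' z ∂ν‖ := by
            refine (norm_add_le _ _).trans ?_
            rw [norm_smul, Real.norm_eq_abs, abs_of_pos hε]
        _ ≤ ‖x - z‖ + ε * (c₁ * (1 + mμ) * ‖x - z‖ + c₂ * (1 + ‖z‖) * c) := by
            have := mul_le_mul_of_nonneg_left h2 hε.le
            linarith
        _ = (1 + ε * c₁ * (1 + mμ)) * ‖x - z‖ + ε * (c₂ * c) * (1 + ‖z‖) := by ring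
    -- the pushed-forward coupling
    have hmapmeas : Measurable (Prod.map Tμ Tν) := hTμc.measurable.prodMap hTνc.measurable
    set π' := π.map (Prod.map Tμ Tν) with hπ'def
    have hπ'prob : IsProbabilityMeasure π' := Measure.isProbabilityMeasure_map hmapmeas.aemeasurable
    have hfst' : π'.map Prod.fst = μ.map Tμ := by
      rw [hπ'def, Measure.map_map measurable_fst hmapmeas,
        show Prod.fst ∘ Prod.map Tμ Tν = Tμ ∘ Prod.fst from rfl,
        ← Measure.map_map hTμc.measurable measurable_fst, hfst]
    have hsnd' : π'.map Prod.snd = ν.map Tν := by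
      rw [hπ'def, Measure.map_map measurable_snd hmapmeas,
        show Prod.snd ∘ Prod.map Tμ Tν = Tν ∘ Prod.snd from rfl,
        ← Measure.map_map hTνc.measurable measurable_snd, hsnd]
    have hcost' : (∫ p, ‖p.1 - p.2‖ ∂π') = ∫ p, ‖Tμ p.1 - Tν p.2‖ ∂π := by
      rw [hπ'def, integral_map hmapmeas.aemeasurable (f := fun p : EuclideanSpace ℝ (Fin d) × EuclideanSpace ℝ (Fin d) => ‖p.1 - p.2‖)
        ((continuous_fst.sub continuous_snd).norm.aestronglyMeasurable)]
      rfl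
    have step1 : W1 (μ.map Tμ) (ν.map Tν) ≤ ∫ p, ‖Tμ p.1 - Tν p.2‖ ∂π := by
      rw [← hcost']
      exact csInf_le (hbdd _ _) ⟨π', hπ'prob, hfst', hsnd', rfl⟩
    -- bound the transported cost
    have hG1 : Integrable (fun p : EuclideanSpace ℝ (Fin d) × EuclideanSpace ℝ (Fin d) =>
        (1 + ε * c₁ * (1 + mμ)) * ‖p.1 - p.2‖) π := hcostInt.const_mul _
    have hG2 : Integrable (fun p : EuclideanSpace ℝ (Fin d) × EuclideanSpace ℝ (Fin d) =>
        ε * (c₂ * c) * (1 + ‖p.2‖)) π := ((integrable_const (1:ℝ)).add hπ2).const_mul _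
    have hsnd_norm : (∫ p, ‖p.2‖ ∂π) = mν := by
      rw [hmνdef, ← hsnd, integral_map measurable_snd.aemeasurable]
      rw [hsnd]; exact hν.aestronglyMeasurable
    have step2 : (∫ p, ‖Tμ p.1 - Tν p.2‖ ∂π)
        ≤ ∫ p, ((1 + ε * c₁ * (1 + mμ)) * ‖p.1 - p.2‖ + ε * (c₂ * c) * (1 + ‖p.2‖)) ∂π := by
      refine integral_mono_of_nonneg (Filter.Eventually.of_forall fun p => norm_nonneg _)
        (hG1.add hG2) (Filter.Eventually.of_forall fun p => hpt p)
    have step3 : (∫ p, ((1 + ε * c₁ * (1 + mμ)) * ‖p.1 - p.2‖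
        + ε * (c₂ * c) * (1 + ‖p.2‖)) ∂π)
        = (1 + ε * c₁ * (1 + mμ)) * c + ε * (c₂ * c) * (1 + mν) := by
      rw [integral_add hG1 hG2, integral_const_mul, integral_const_mul, hcost,
        integral_add (integrable_const _) hπ2, integral_const, hsnd_norm]
      simp [measure_univ]
    have : (1 + ε * c₁ * (1 + mμ)) * c + ε * (c₂ * c) * (1 + mν) = K * c := by
      rw [hKdef]; ring
    linarith [step1, step2, step3.le, step3.ge]
  -- conclude
  have hfinal : ∀ c ∈ {c | ∃ π : Measure (EuclideanSpace ℝ (Fin d) × EuclideanSpace ℝ (Fin d)),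
      IsProbabilityMeasure π ∧ π.map Prod.fst = μ ∧ π.map Prod.snd = ν ∧
      (∫ p, ‖p.1 - p.2‖ ∂π) = c}, W1 (μ.map Tμ) (ν.map Tν) / K ≤ c := by
    intro c hc
    rw [div_le_iff₀ hK0]
    calc W1 (μ.map Tμ) (ν.map Tν) ≤ K * c := key c hc
      _ = c * K := mul_comm _ _
  have hle : W1 (μ.map Tμ) (ν.map Tν) / K ≤ W1 μ ν := le_csInf hSne hfinal
  rw [div_le_iff₀ hK0] at hle
  calc W1 (μ.map Tμ) (ν.map Tν) ≤ W1 μ ν * K := hle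
    _ = W1 μ ν * (1 + ε * c₁ * (1 + mμ) + ε * c₂ * (1 + mν)) := by rw [hKdef]
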